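/- For $n = 2$ (so $m = 1$, $\Delta_2 = 2t^2 - 5t + 2 = (2t-1)(t-2)$), the group $U(\Lambda_2)/\{t^j\}_{j\in\mathbb{Z}}$ of unitary units of $\Lambda_2 = \mathbb{Z}[t,t^{-1}]/(\Delta_2)$ modulo powers of $t$ is isomorphic to $\mathbb{Z}/2\mathbb{Z}$. Concretely: $U(\Lambda_2) \cong \mathbb{Z}[1/2]^\times = \{\pm 2^j\}$ via $t \mapsto 1/2$, since every unit $x = \pm 2^j$ of $\mathbb{Z}[1/2]$ satisfies $x - x^{-1} \in 3\cdot\mathbb{Z}[1/2]$, and the image of $t$ generates the index-two subgroup $\{2^j\}$. -/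

import Mathlib

open LaurentPolynomial Polynomial
noncomputable def evalHom {S : Type} [CommRing S] (u : Sˣ) : LaurentPolynomial ℤ →+* S :=
  AddMonoidAlgebra.liftNCRingHom (Int.castRingHom S)
    ((Units.coeHom S).comp (zpowersHom Sˣ u)) (fun _ _ => Commute.all _ _)

lemma evalHom_single {S : Type} [CommRing S] (u : Sˣ) (n : ℤ) (a : ℤ) :
    evalHom u (AddMonoidAlgebra.single n a) = a * ↑(u ^ n) := by
  show AddMonoidAlgebra.liftNC _ _ (AddMonoidAlgebra.single n a) = _
  rw [AddMonoidAlgebra.liftNC_single]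
  rfl

lemma evalHom_T {S : Type} [CommRing S] (u : Sˣ) (n : ℤ) : evalHom u (T n) = ↑(u ^ n) := by
  rw [show (T n : LaurentPolynomial ℤ) = AddMonoidAlgebra.single n 1 from rfl, evalHom_single]; simp

lemma evalHom_C {S : Type} [CommRing S] (u : Sˣ) (a : ℤ) :
    evalHom u (LaurentPolynomial.C a) = a := by
  rw [show (LaurentPolynomial.C a : LaurentPolynomial ℤ) = AddMonoidAlgebra.single 0 a from rfl,
    evalHom_single]; simp

lemma laurent_ext {S : Type} [CommRing S] (F G : LaurentPolynomial ℤ →+* S)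
    (h : F (T 1) = G (T 1)) : F = G := by
  have hFi : F (T 1) * F (T (-1)) = 1 := by
    rw [← map_mul, ← T_add]; norm_num
  have hGi : G (T 1) * G (T (-1)) = 1 := by
    rw [← map_mul, ← T_add]; norm_num
  have hinv : F (T (-1)) = G (T (-1)) := by
    have := hGi
    rw [← h] at this
    calc F (T (-1)) = F (T (-1)) * (F (T 1) * G (T (-1))) := by rw [this, mul_one]
      _ = (F (T 1) * F (T (-1))) * G (T (-1)) := by ring
      _ = G (T (-1)) := by rw [hFi, one_mul]
  have hT : ∀ n : ℤ, F (T n) = G (T n) := by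
    intro n
    induction n using Int.induction_on with
    | zero => rw [T_zero, map_one, map_one]
    | succ k ih => rw [T_add, map_mul, map_mul, ih, h]
    | pred k ih =>
        rw [show (-(k:ℤ)-1) = (-(k:ℤ)) + (-1) by ring, T_add, map_mul, map_mul, ih, hinv]
  have hC : ∀ a : ℤ, F (LaurentPolynomial.C a) = G (LaurentPolynomial.C a) := by
    intro a
    have : ∀ (H : LaurentPolynomial ℤ →+* S), H (LaurentPolynomial.C a) = (a : S) := by
      intro H
      have : (LaurentPolynomial.C a : LaurentPolynomial ℤ) = (a : LaurentPolynomial ℤ) := by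
        simp [Int.cast_injective]
      rw [this, map_intCast]
    rw [this F, this G]
  refine DFunLike.ext F G fun x => ?_
  induction x using LaurentPolynomial.induction_on' with
  | add p q hp hq => rw [map_add, map_add, hp, hq]
  | C_mul_T n a => rw [map_mul, map_mul, hC, hT]

lemma evalHom_toLaurent {S : Type} [CommRing S] (u : Sˣ) (p : Polynomial ℤ) :
    evalHom u (p.toLaurent) = p.eval₂ (Int.castRingHom S) ↑u := by
  have : (evalHom u).comp Polynomial.toLaurent = Polynomial.eval₂RingHom (Int.castRingHom S) ↑u := by
    apply Polynomial.ringHom_ext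
    · intro a
      simp [Polynomial.toLaurent_C, evalHom_C]
    · simp [Polynomial.toLaurent_X, evalHom_T]
  have := RingHom.congr_fun this p
  simpa using this

noncomputable abbrev RR : Type := Localization.Away (2 : ℤ)

lemma two_mem : (2 : ℤ) ∈ Submonoid.powers (2:ℤ) := ⟨1, pow_one 2⟩

noncomputable def u2 : RRˣ := (IsLocalization.map_units RR (⟨2, two_mem⟩ : Submonoid.powers (2:ℤ))).unit

lemma u2_val : (u2 : RR) = algebraMap ℤ RR 2 := rfl

lemma algRR_inj : Function.Injective (algebraMap ℤ RR) := by
  apply IsLocalization.injective (M := Submonoid.powers (2:ℤ)) RR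
  intro x hx
  obtain ⟨n, rfl⟩ := hx
  exact pow_mem (mem_nonZeroDivisors_of_ne_zero two_ne_zero) n

lemma u2_pow_nat (k : ℕ) : ((u2 ^ k : RRˣ) : RR) = algebraMap ℤ RR (2 ^ k) := by
  rw [Units.val_pow_eq_pow_val, u2_val, map_pow]

lemma units_RR (y : RR) (hy : IsUnit y) : ∃ j : ℤ, y = ↑(u2 ^ j) ∨ y = -↑(u2 ^ j) := by
  obtain ⟨v, rfl⟩ := hy
  obtain ⟨⟨n, s⟩, hn⟩ := IsLocalization.surj (Submonoid.powers (2:ℤ)) (v : RR)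
  obtain ⟨⟨m, t⟩, hm⟩ := IsLocalization.surj (Submonoid.powers (2:ℤ)) ((v⁻¹ : RRˣ) : RR)
  obtain ⟨k, hk⟩ := s.2
  obtain ⟨l, hl⟩ := t.2
  have hk' : (2:ℤ)^k = (s:ℤ) := hk
  have hl' : (2:ℤ)^l = (t:ℤ) := hl
  simp only at hn hm
  have key : n * m = 2 ^ (k + l) := by
    apply algRR_inj
    rw [map_mul]
    calc (algebraMap ℤ RR) n * algebraMap ℤ RR m
        = ((v:RR) * algebraMap ℤ RR (s:ℤ)) * (((v⁻¹:RRˣ):RR) * algebraMap ℤ RR (t:ℤ)) := by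
          rw [hn, hm]
      _ = (((v * v⁻¹ : RRˣ)):RR) * (algebraMap ℤ RR (s:ℤ) * algebraMap ℤ RR (t:ℤ)) := by
          rw [Units.val_mul]; ring
      _ = algebraMap ℤ RR ((2:ℤ)^k * 2^l) := by
          rw [mul_inv_cancel, Units.val_one, one_mul, ← map_mul, hk', hl']
      _ = algebraMap ℤ RR (2 ^ (k + l)) := by rw [pow_add]
  have hdvd : n.natAbs ∣ 2 ^ (k + l) := by
    have h1 : n ∣ 2 ^ (k + l) := Dvd.intro m key
    have h2 := Int.natAbs_dvd_natAbs.mpr h1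
    simpa [Int.natAbs_pow] using h2
  obtain ⟨a, _, ha⟩ := (Nat.dvd_prime_pow Nat.prime_two).mp hdvd
  have habs : algebraMap ℤ RR (n.natAbs : ℤ) = ↑(u2 ^ (a:ℤ)) := by
    rw [ha, zpow_natCast, u2_pow_nat]
    norm_cast
  have cancel : ∀ (w : RRˣ), (w:RR) * ↑(u2 ^ (k:ℤ)) = ↑(u2 ^ (a:ℤ)) →
      (w:RR) = ↑(u2 ^ ((a:ℤ) - k)) := by
    intro w hw
    have : w * u2 ^ (k:ℤ) = u2 ^ (a:ℤ) := Units.ext (by exact_mod_cast hw)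
    have : w = u2 ^ ((a:ℤ) - k) := by
      rw [zpow_sub]
      exact eq_mul_inv_of_mul_eq this
    exact congrArg Units.val this
  have hvk : (v : RR) * ↑(u2 ^ (k:ℤ)) = algebraMap ℤ RR n := by
    rw [zpow_natCast, u2_pow_nat, hk']
    exact_mod_cast hn
  rcases Int.natAbs_eq n with hn' | hn'
  · refine ⟨(a : ℤ) - k, Or.inl ?_⟩
    apply cancel v
    rw [hvk, hn' ,habs]
  · refine ⟨(a : ℤ) - k, Or.inr ?_⟩
    have : ((-v : RRˣ) : RR) * ↑(u2 ^ (k:ℤ)) = ↑(u2 ^ (a:ℤ)) := by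
      rw [Units.val_neg, neg_mul, hvk, hn']
      rw [show algebraMap ℤ RR (-(n.natAbs:ℤ)) = -(algebraMap ℤ RR (n.natAbs:ℤ)) from map_neg _ _,
        neg_neg, habs]
    have := cancel (-v) this
    rw [Units.val_neg] at this
    rw [← this, neg_neg]

lemma half_mul_two : ((u2⁻¹ : RRˣ) : RR) * algebraMap ℤ RR 2 = 1 := by
  rw [← u2_val, ← Units.val_mul, inv_mul_cancel, Units.val_one]

/-- cancel a factor of 2: if `(2X-1) ∣ 2q` then `(2X-1) ∣ q` in `ℤ[X]`. -/
lemma dvd_cancel_two (q s : Polynomial ℤ)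
    (h : Polynomial.C 2 * q = (Polynomial.C 2 * Polynomial.X - 1) * s) :
    (Polynomial.C 2 * Polynomial.X - 1) ∣ q := by
  have hs : ∀ i, (2:ℤ) ∣ s.coeff i := by
    intro i
    have hmap := congrArg (Polynomial.map (Int.castRingHom (ZMod 2))) h
    simp only [Polynomial.map_mul, Polynomial.map_sub, Polynomial.map_one,
      Polynomial.map_C, Polynomial.map_X] at hmap
    have h2 : ((Int.castRingHom (ZMod 2)) 2 : ZMod 2) = 0 := by decide
    rw [h2, Polynomial.C_0, zero_mul, zero_mul, zero_sub, neg_one_mul] at hmap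
    have : s.map (Int.castRingHom (ZMod 2)) = 0 := by
      have := congrArg Neg.neg hmap
      simpa using this.symm
    have hc := congrArg (fun p => Polynomial.coeff p i) this
    simp only [Polynomial.coeff_map, Polynomial.coeff_zero] at hc
    exact (ZMod.intCast_zmod_eq_zero_iff_dvd _ 2).mp hc
  obtain ⟨s', hs'⟩ := (Polynomial.C_dvd_iff_dvd_coeff (2:ℤ) s).mpr hs
  refine ⟨s', ?_⟩
  have h2 : Polynomial.C (2:ℤ) * q = Polynomial.C 2 * ((Polynomial.C 2 * Polynomial.X - 1) * s') := by
    rw [h, hs']; ring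
  exact mul_left_cancel₀ (by exact_mod_cast Polynomial.C_ne_zero.mpr two_ne_zero) h2

/-- if an integer polynomial vanishes at `1/2 ∈ ℤ[1/2]` then `2X - 1` divides it. -/
lemma dvd_of_root_half (q : Polynomial ℤ)
    (h : q.eval₂ (Int.castRingHom RR) ((u2⁻¹ : RRˣ) : RR) = 0) :
    (Polynomial.C 2 * Polynomial.X - 1) ∣ q := by
  generalize hd : q.natDegree = N
  induction N using Nat.strong_induction_on generalizing q with
  | _ N ih =>
  by_cases hq0 : q = 0
  · exact hq0 ▸ dvd_zero _
  rcases Nat.eq_zero_or_pos N with hN | hN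
  · -- constant polynomial
    subst hN
    have : q = Polynomial.C (q.coeff 0) := Polynomial.eq_C_of_natDegree_eq_zero hd
    rw [this] at h ⊢
    rw [Polynomial.eval₂_C] at h
    have : q.coeff 0 = 0 := algRR_inj (by simpa [algebraMap_int_eq] using h)
    rw [this, Polynomial.C_0]
    exact dvd_zero _
  · set a := q.leadingCoeff with haa
    have ha : a ≠ 0 := Polynomial.leadingCoeff_ne_zero.mpr hq0
    set d : Polynomial ℤ := Polynomial.C 2 * Polynomial.X - 1 with hdd
    set q' : Polynomial ℤ :=
      Polynomial.C 2 * q - Polynomial.C a * Polynomial.X ^ (N - 1) * d with hq'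
    have hfact : Polynomial.C a * Polynomial.X ^ (N - 1) * d
        = Polynomial.C 2 * Polynomial.C a * Polynomial.X ^ N - Polynomial.C a * Polynomial.X ^ (N-1) := by
      rw [hdd]
      have hx : Polynomial.X ^ (N - 1) * Polynomial.X = (Polynomial.X : Polynomial ℤ) ^ N := by
        rw [← pow_succ, Nat.sub_add_cancel hN]
      linear_combination (Polynomial.C 2 * Polynomial.C a) * hx
    have hdeg : q'.natDegree < N := by
      have hdq : (Polynomial.C 2 * q).degree = (N : WithBot ℕ) := by
        rw [Polynomial.degree_mul, Polynomial.degree_C (by norm_num : (2:ℤ) ≠ 0), zero_add,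
          Polynomial.degree_eq_natDegree hq0, hd]
      have h2a : (2 : ℤ) * a ≠ 0 := by simpa using ha
      have h1 : (Polynomial.C 2 * q - Polynomial.C (2*a) * Polynomial.X ^ N).degree
          < (N : WithBot ℕ) := by
        have := Polynomial.degree_sub_lt (p := Polynomial.C 2 * q)
          (q := Polynomial.C (2*a) * Polynomial.X ^ N)
          (by rw [hdq, Polynomial.degree_C_mul_X_pow N h2a])
          (by
            intro h0
            exact hq0 (by simpa [(by norm_num : (2:ℤ) ≠ 0)] using mul_eq_zero.mp h0))
          (by
            rw [Polynomial.leadingCoeff_mul, Polynomial.leadingCoeff_C,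
              Polynomial.leadingCoeff_C_mul_X_pow, haa])
        rwa [hdq] at this
      have h2 : (Polynomial.C a * Polynomial.X ^ (N-1)).degree < (N : WithBot ℕ) := by
        rw [Polynomial.degree_C_mul_X_pow (N-1) ha]
        exact_mod_cast Nat.sub_lt hN one_pos
      have hdq' : q'.degree < (N : WithBot ℕ) := by
        have hrw : q' = (Polynomial.C 2 * q - Polynomial.C (2*a) * Polynomial.X ^ N)
            + Polynomial.C a * Polynomial.X ^ (N-1) := by
          rw [hq', hfact, Polynomial.C_mul]; ring
        rw [hrw]
        exact lt_of_le_of_lt (Polynomial.degree_add_le _ _) (max_lt h1 h2)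
      by_cases hq'0 : q' = 0
      · rw [hq'0]; simpa using hN
      · exact (Polynomial.natDegree_lt_iff_degree_lt hq'0).mpr hdq'
    have hval : q'.eval₂ (Int.castRingHom RR) ((u2⁻¹ : RRˣ) : RR) = 0 := by
      rw [hq']
      simp only [Polynomial.eval₂_sub, Polynomial.eval₂_mul, Polynomial.eval₂_C,
        Polynomial.eval₂_X, Polynomial.eval₂_pow, Polynomial.eval₂_one, h]
      rw [hdd]
      simp only [Polynomial.eval₂_sub, Polynomial.eval₂_mul, Polynomial.eval₂_C,
        Polynomial.eval₂_X, Polynomial.eval₂_one]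
      have : (Int.castRingHom RR) 2 * ((u2⁻¹ : RRˣ) : RR) - 1 = 0 := by
        rw [mul_comm]
        rw [show ((Int.castRingHom RR) 2 : RR) = algebraMap ℤ RR 2 by
            rw [eq_intCast, eq_intCast],
          half_mul_two, sub_self]
      rw [this]
      ring
    have hdvd' : d ∣ q' := ih q'.natDegree hdeg q' hval rfl
    obtain ⟨s, hsx⟩ := hdvd'
    have : Polynomial.C 2 * q = d * (s + Polynomial.C a * Polynomial.X ^ (N-1)) := by
      have : Polynomial.C 2 * q = q' + Polynomial.C a * Polynomial.X ^ (N - 1) * d := by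
        rw [hq']; ring
      rw [this, hsx]; ring
    exact dvd_cancel_two q _ this

open LaurentPolynomial in
/-- `Δₙ = n t² - (2n+1) t + n` as a Laurent polynomial over `ℤ`. -/
noncomputable def DeltaL (n : ℤ) : LaurentPolynomial ℤ :=
  LaurentPolynomial.C n * T 2 - LaurentPolynomial.C (2 * n + 1) * T 1 + LaurentPolynomial.C n

/-- `Λ₂ = ℤ[t,t⁻¹]/(2t² - 5t + 2)`. -/
abbrev Lam2 := LaurentPolynomial ℤ ⧸ Ideal.span {DeltaL 2}

/-- The quotient map `ℤ[t,t⁻¹] → Λ₂`. -/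
noncomputable abbrev Qmk2 : LaurentPolynomial ℤ →+* Lam2 :=
  Ideal.Quotient.mk (Ideal.span {DeltaL 2})

lemma deltaL_eq : DeltaL 2 = Polynomial.toLaurent
    ((Polynomial.X - Polynomial.C 2) * (Polynomial.C 2 * Polynomial.X - 1)) := by
  have : ((Polynomial.X : Polynomial ℤ) - Polynomial.C 2) * (Polynomial.C 2 * Polynomial.X - 1)
      = Polynomial.C 2 * Polynomial.X^2 - Polynomial.C 5 * Polynomial.X + Polynomial.C 2 := by
    have : Polynomial.C (5:ℤ) = Polynomial.C 2 * Polynomial.C 2 + 1 := by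
      rw [← Polynomial.C_mul, show (2*2:ℤ) = 4 from rfl, ← Polynomial.C_1, ← Polynomial.C_add]
      norm_num
    rw [this]; ring
  rw [this]
  simp only [DeltaL, map_add, map_sub, map_mul, Polynomial.toLaurent_C, Polynomial.toLaurent_X,
    map_pow]
  rw [T_pow]
  norm_num

lemma powers_le_nzd : Submonoid.powers (2:ℤ) ≤ nonZeroDivisors ℤ := by
  rintro x ⟨n, rfl⟩
  exact pow_mem (mem_nonZeroDivisors_of_ne_zero two_ne_zero) n

lemma rr_isDomain : IsDomain RR :=
  IsLocalization.isDomain_localization powers_le_nzd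

lemma ker_pair (f : LaurentPolynomial ℤ)
    (h1 : evalHom u2⁻¹ f = 0) (h2 : evalHom u2 f = 0) : f ∈ Ideal.span {DeltaL 2} := by
  obtain ⟨N, p, hp⟩ := f.exists_T_pow
  -- eval₂ of p at 2 and 1/2 vanish
  have hpeval : ∀ u : RRˣ, evalHom u f = 0 → p.eval₂ (Int.castRingHom RR) ↑u = 0 := by
    intro u hu
    rw [← evalHom_toLaurent, hp, map_mul, hu, zero_mul]
  have h2' := hpeval u2 h2
  have hroot : p.eval 2 = 0 := by
    apply algRR_inj
    rw [map_zero]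
    have : (algebraMap ℤ RR) (p.eval 2) = p.eval₂ (Int.castRingHom RR) ((u2:RR)) := by
      rw [u2_val]
      rw [show (algebraMap ℤ RR) = Int.castRingHom RR by ext x; rw [eq_intCast, eq_intCast]]
      exact (Polynomial.eval₂_at_apply _ _).symm
    rw [this, h2']
  obtain ⟨q, hq⟩ := Polynomial.dvd_iff_isRoot.mpr hroot
  have h1' := hpeval u2⁻¹ h1
  -- (1/2 - 2) * eval₂ q = 0
  have hfac : ((u2⁻¹:RRˣ):RR) - (algebraMap ℤ RR 2) ≠ 0 := by
    intro h0
    have : (((u2⁻¹:RRˣ):RR) - algebraMap ℤ RR 2) * (u2:RR) = 0 := by rw [h0, zero_mul]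
    rw [sub_mul, mul_comm ((u2⁻¹:RRˣ):RR) (u2:RR), ← Units.val_mul, mul_inv_cancel,
      Units.val_one, u2_val, ← map_mul, ← map_one (algebraMap ℤ RR), ← map_sub] at this
    have h3 : algebraMap ℤ RR (1 - 2*2) = algebraMap ℤ RR 0 := by rw [map_zero]; exact this
    have := algRR_inj h3
    norm_num at this
  have hq' : q.eval₂ (Int.castRingHom RR) ((u2⁻¹:RRˣ):RR) = 0 := by
    rw [hq] at h1'
    rw [Polynomial.eval₂_mul, Polynomial.eval₂_sub, Polynomial.eval₂_X, Polynomial.eval₂_C] at h1'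
    haveI := rr_isDomain
    rcases mul_eq_zero.mp h1' with hz | hz
    · exfalso
      apply hfac
      rw [show algebraMap ℤ RR 2 = (Int.castRingHom RR) 2 by rw [eq_intCast, eq_intCast]]
      exact hz
    · exact hz
  obtain ⟨r, hr⟩ := dvd_of_root_half q hq'
  rw [Ideal.mem_span_singleton]
  refine ⟨Polynomial.toLaurent r * T (-(N:ℤ)), ?_⟩
  have hf : f = Polynomial.toLaurent p * T (-(N:ℤ)) := by
    rw [hp, mul_assoc, ← T_add, show (N:ℤ) + -(N:ℤ) = 0 by ring, T_zero, mul_one]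
  rw [hf, hq, hr, deltaL_eq]
  simp only [map_mul]
  ring

lemma evalHom_delta {S : Type} [CommRing S] (u : Sˣ)
    (h : 2 * ((u:S)*(u:S)) - 5*(u:S) + 2 = 0) : evalHom u (DeltaL 2) = 0 := by
  simp only [DeltaL, map_add, map_sub, map_mul, evalHom_C, evalHom_T]
  have e2 : ((u ^ (2:ℤ) : Sˣ) : S) = (u:S) * u := by
    rw [show (2:ℤ) = ((2:ℕ):ℤ) by norm_num, zpow_natCast, Units.val_pow_eq_pow_val, sq]
  have e1 : ((u ^ (1:ℤ) : Sˣ) : S) = u := by rw [zpow_one]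
  rw [e2, e1]
  push_cast
  linear_combination h

lemma phi_delta_aux : 2 * ((u2:RR)*(u2:RR)) - 5*(u2:RR) + 2 = 0 := by
  rw [u2_val, eq_intCast]
  norm_num

lemma psi_delta_aux :
    2 * (((u2⁻¹:RRˣ):RR)*((u2⁻¹:RRˣ):RR)) - 5*((u2⁻¹:RRˣ):RR) + 2 = 0 := by
  rw [← Units.mul_left_eq_zero (u := u2*u2)]
  have hu : ((u2⁻¹:RRˣ):RR) * (u2:RR) = 1 := by
    rw [← Units.val_mul, inv_mul_cancel, Units.val_one]
  rw [Units.val_mul]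
  linear_combination (2*((u2⁻¹:RRˣ):RR)*(u2:RR) + 2 - 5*(u2:RR)) * hu + phi_delta_aux

noncomputable def psi : Lam2 →+* RR :=
  Ideal.Quotient.lift _ (evalHom u2⁻¹) (by
    intro a ha
    obtain ⟨c, rfl⟩ := Ideal.mem_span_singleton'.mp ha
    rw [map_mul, evalHom_delta u2⁻¹ psi_delta_aux, mul_zero])

noncomputable def phi : Lam2 →+* RR :=
  Ideal.Quotient.lift _ (evalHom u2) (by
    intro a ha
    obtain ⟨c, rfl⟩ := Ideal.mem_span_singleton'.mp ha
    rw [map_mul, evalHom_delta u2 phi_delta_aux, mul_zero])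

lemma psi_mk (g : LaurentPolynomial ℤ) : psi (Qmk2 g) = evalHom u2⁻¹ g := rfl
lemma phi_mk (g : LaurentPolynomial ℤ) : phi (Qmk2 g) = evalHom u2 g := rfl

lemma psi_T (n : ℤ) : psi (Qmk2 (T n)) = ↑(u2 ^ (-n)) := by
  rw [psi_mk, evalHom_T, inv_zpow, ← zpow_neg]

lemma phi_T (n : ℤ) : phi (Qmk2 (T n)) = ↑(u2 ^ n) := by
  rw [phi_mk, evalHom_T]

lemma pair_inj (x y : Lam2) (h1 : psi x = psi y) (h2 : phi x = phi y) : x = y := by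
  obtain ⟨a, rfl⟩ := Ideal.Quotient.mk_surjective x
  obtain ⟨b, rfl⟩ := Ideal.Quotient.mk_surjective y
  rw [Ideal.Quotient.eq]
  apply ker_pair
  · rw [map_sub, sub_eq_zero]
    exact h1
  · rw [map_sub, sub_eq_zero]
    exact h2

lemma lam2_hom_ext {S : Type} [CommRing S] (F G : Lam2 →+* S)
    (h : F (Qmk2 (T 1)) = G (Qmk2 (T 1))) : F = G := by
  apply Ideal.Quotient.ringHom_ext
  exact laurent_ext _ _ h

section Tau
variable (τ : Lam2 →+* Lam2) (hτ : τ (Qmk2 (T 1)) = Qmk2 (T (-1)))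
include hτ

lemma tau_T (j : ℤ) : τ (Qmk2 (T j)) = Qmk2 (T (-j)) := by
  have hext : τ.comp Qmk2 = Qmk2.comp (LaurentPolynomial.invert (R := ℤ)).toAlgHom.toRingHom := by
    apply laurent_ext
    show τ (Qmk2 (T 1)) = Qmk2 (LaurentPolynomial.invert (T 1))
    rw [hτ, invert_T]
  have := RingHom.congr_fun hext (T j)
  simpa [invert_T] using this

lemma psi_tau (z : Lam2) : psi (τ z) = phi z := by
  have hext : psi.comp τ = phi := by
    apply lam2_hom_ext
    show psi (τ (Qmk2 (T 1))) = phi (Qmk2 (T 1))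
    rw [hτ, psi_T, phi_T]
    norm_num
  exact RingHom.congr_fun hext z

end Tau

noncomputable def g3 : RR →+* ZMod 3 :=
  IsLocalization.lift (M := Submonoid.powers (2:ℤ)) (g := Int.castRingHom (ZMod 3)) (by
    rintro ⟨y, n, rfl⟩
    simp only [map_pow]
    exact IsUnit.pow n (IsUnit.of_mul_eq_one 2 (by decide)))

lemma g3_alg (n : ℤ) : g3 (algebraMap ℤ RR n) = (n : ZMod 3) :=
  IsLocalization.lift_eq _ n

lemma g3_ker (y : RR) (h : g3 y = 0) : ∃ c, y = 3 * c := by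
  obtain ⟨⟨n, s⟩, hn⟩ := IsLocalization.surj (Submonoid.powers (2:ℤ)) y
  obtain ⟨k, hk⟩ := s.2
  have hk' : (2:ℤ)^k = (s:ℤ) := hk
  simp only at hn
  have hcast : ((n : ZMod 3)) = 0 := by
    have hg := congrArg g3 hn
    rw [map_mul, h, zero_mul, g3_alg] at hg
    exact hg.symm
  obtain ⟨m, hm⟩ := (ZMod.intCast_zmod_eq_zero_iff_dvd n 3).mp hcast
  refine ⟨algebraMap ℤ RR m * ↑((u2^k)⁻¹), ?_⟩
  have hyk : y * ↑(u2^k) = algebraMap ℤ RR n := by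
    rw [u2_pow_nat, hk']; exact hn
  have h3 : y * ↑(u2^k) = 3 * (algebraMap ℤ RR m) := by
    rw [hyk, hm, map_mul]
    norm_num
  calc y = y * ↑(u2^k) * ↑((u2^k)⁻¹) := by
        rw [mul_assoc, ← Units.val_mul, mul_inv_cancel, Units.val_one, mul_one]
    _ = 3 * (algebraMap ℤ RR m * ↑((u2^k)⁻¹)) := by rw [h3]; ring

noncomputable def gq : RR →+* ℚ :=
  IsLocalization.lift (M := Submonoid.powers (2:ℤ)) (g := Int.castRingHom ℚ) (by
    rintro ⟨y, n, rfl⟩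
    simp only [map_pow]
    exact IsUnit.pow n (IsUnit.of_mul_eq_one (1/2 : ℚ) (by norm_num)))

lemma gq_alg (n : ℤ) : gq (algebraMap ℤ RR n) = (n : ℚ) :=
  IsLocalization.lift_eq _ n

lemma gq_u2_zpow (m : ℤ) : gq ↑(u2 ^ m) = (2:ℚ) ^ m := by
  have : gq ↑(u2 ^ m) = ((Units.map (gq : RR →* ℚ) (u2 ^ m) : ℚˣ) : ℚ) := rfl
  rw [this, map_zpow]
  have hw : ((Units.map (gq : RR →* ℚ) u2 : ℚˣ) : ℚ) = (2:ℚ) := by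
    show gq (u2 : RR) = 2
    rw [u2_val, gq_alg]
    norm_num
  rw [Units.val_zpow_eq_zpow_val, hw]

set_option maxHeartbeats 1000000 in
theorem stmt18 (τ : Lam2 →+* Lam2)
    (hτ : τ (Qmk2 (LaurentPolynomial.T 1)) = Qmk2 (LaurentPolynomial.T (-1))) :
    (∀ x : Localization.Away (2 : ℤ), IsUnit x →
      ∃ c : Localization.Away (2 : ℤ), x - Ring.inverse x = 3 * c) ∧
    (∃ ψ : Lam2 →+* Localization.Away (2 : ℤ),
      ψ (Qmk2 (LaurentPolynomial.T 1)) =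
        Ring.inverse (algebraMap ℤ (Localization.Away (2 : ℤ)) 2) ∧
      Set.BijOn ψ {x : Lam2 | x * τ x = 1} {y : Localization.Away (2 : ℤ) | IsUnit y}) ∧
    (∀ x : Lam2, x * τ x = 1 → ∃ j : ℤ,
      x = Qmk2 (LaurentPolynomial.T j) ∨ x = -Qmk2 (LaurentPolynomial.T j)) ∧
    (∀ j : ℤ, (-1 : Lam2) ≠ Qmk2 (LaurentPolynomial.T j)) := by
  -- preliminary facts
  have hpair : ∀ x : Lam2, x * τ x = 1 → psi x * phi x = 1 := by
    intro x hx
    have := congrArg psi hx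
    rw [map_mul, map_one, psi_tau τ hτ] at this
    exact this
  refine ⟨?_, ⟨psi, ?_, ?_, ?_, ?_⟩, ?_, ?_⟩
  -- Part 1
  · intro x hx
    obtain ⟨u, rfl⟩ := hx
    have hunit : IsUnit (g3 (u:RR)) := (Units.isUnit u).map g3
    obtain ⟨v, hv⟩ := hunit
    have hvv : ∀ w : (ZMod 3)ˣ, (w : ZMod 3) * w = 1 := by decide
    have hsq : g3 ((u:RR) * u - 1) = 0 := by
      rw [map_sub, map_mul, map_one, ← hv, hvv, sub_self]
    obtain ⟨c, hc⟩ := g3_ker _ hsq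
    refine ⟨↑u⁻¹ * c, ?_⟩
    rw [Ring.inverse_unit]
    have key : (u:RR) - ↑u⁻¹ = ↑u⁻¹ * ((u:RR)*u - 1) := by
      calc (u:RR) - ↑u⁻¹ = (↑u⁻¹ * ↑u) * ↑u - ↑u⁻¹ * 1 := by
            rw [← Units.val_mul, inv_mul_cancel, Units.val_one, one_mul, mul_one]
        _ = ↑u⁻¹ * ((u:RR)*u - 1) := by ring
    rw [key, hc]; ring
  -- psi (t) = 1/2
  · rw [psi_T]
    have : algebraMap ℤ RR 2 = ↑u2 := u2_val.symm
    rw [this, Ring.inverse_unit]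
    rw [show (-1 : ℤ) = -1 from rfl, zpow_neg, zpow_one]
  -- MapsTo
  · intro x hx
    exact IsUnit.of_mul_eq_one _ (hpair x hx)
  -- InjOn
  · intro x hx y hy hxy
    have e1 := hpair x hx
    have e2 := hpair y hy
    have hphi : phi x = phi y := by
      calc phi x = phi x * (psi y * phi y) := by rw [e2, mul_one]
        _ = (psi x * phi x) * phi y := by rw [← hxy]; ring
        _ = phi y := by rw [e1, one_mul]
    exact pair_inj x y hxy hphi
  -- SurjOn
  · intro y hy
    obtain ⟨j, hj | hj⟩ := units_RR y hy
    · refine ⟨Qmk2 (T (-j)), ?_, ?_⟩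
      · show Qmk2 (T (-j)) * τ (Qmk2 (T (-j))) = 1
        rw [tau_T τ hτ, neg_neg, ← map_mul, ← T_add, neg_add_cancel, T_zero, map_one]
      · rw [psi_T, neg_neg, hj]
    · refine ⟨-Qmk2 (T (-j)), ?_, ?_⟩
      · show -Qmk2 (T (-j)) * τ (-Qmk2 (T (-j))) = 1
        rw [map_neg, tau_T τ hτ, neg_neg]
        have h1 : Qmk2 (T (-j)) * Qmk2 (T j) = 1 := by
          rw [← map_mul, ← T_add, neg_add_cancel, T_zero, map_one]
        calc -Qmk2 (T (-j)) * -Qmk2 (T j) = Qmk2 (T (-j)) * Qmk2 (T j) := by ring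
          _ = 1 := h1
      · show psi (-Qmk2 (T (-j))) = y
        rw [map_neg, psi_T, neg_neg, hj]
  -- Part 3: unitary units are ± t^j
  · intro x hx
    have e1 := hpair x hx
    have hux : IsUnit (psi x) := IsUnit.of_mul_eq_one _ e1
    obtain ⟨j, hj | hj⟩ := units_RR (psi x) hux
    · refine ⟨-j, Or.inl ?_⟩
      apply pair_inj
      · rw [psi_T, neg_neg, hj]
      · rw [phi_T]
        have hinv : ↑(u2 ^ j) * ((u2 ^ (-j) : RRˣ) : RR) = 1 := by
          rw [← Units.val_mul, ← zpow_add, add_neg_cancel, zpow_zero, Units.val_one]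
        calc phi x = (↑(u2 ^ j) * ((u2 ^ (-j):RRˣ):RR)) * phi x := by rw [hinv, one_mul]
          _ = ((u2 ^ (-j):RRˣ):RR) * (psi x * phi x) := by rw [hj]; ring
          _ = ((u2 ^ (-j):RRˣ):RR) := by rw [e1, mul_one]
    · refine ⟨-j, Or.inr ?_⟩
      apply pair_inj
      · rw [map_neg, psi_T, neg_neg, hj]
      · rw [map_neg, phi_T]
        have hinv : ↑(u2 ^ j) * ((u2 ^ (-j) : RRˣ) : RR) = 1 := by
          rw [← Units.val_mul, ← zpow_add, add_neg_cancel, zpow_zero, Units.val_one]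
        calc phi x = (↑(u2 ^ j) * ((u2 ^ (-j):RRˣ):RR)) * phi x := by rw [hinv, one_mul]
          _ = -(((u2 ^ (-j):RRˣ):RR)) * (psi x * phi x) := by rw [hj]; ring
          _ = -(((u2 ^ (-j):RRˣ):RR)) := by rw [e1, mul_one]
  -- Part 4: -1 is not a power of t
  · intro j h
    have := congrArg psi h
    rw [map_neg, map_one, psi_T] at this
    have hq := congrArg gq this
    rw [map_neg, map_one, gq_u2_zpow] at hq
    have hpos : (0:ℚ) < (2:ℚ) ^ (-j) := zpow_pos (by norm_num) _
    rw [← hq] at hpos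
    norm_num at hpos
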